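/- arXiv:0909.2190 — 4 statements merged into one kernel-verified Lean document; each statement's English description precedes it below -/
import Mathlib

section
/- Every almost d-polycyclic group has a d-polycyclic normal subgroup of finite index. Here a group H is 0-polycyclic if trivial, (d+1)-polycyclic if it has a d-polycyclic normal subgroup N with H/N a finitely generated abelian group of rank 1; and H is almost d-polycyclic if it has a chain H = H₁ ⊵ H₂ ⊵ ⋯ ⊵ H_{2d+2} = 1 with each H_{2i}/H_{2i+1} finite and each H_{2i+1}/H_{2i+2} ≅ ℤ. -/
/-- A finitely generated abelian group of rank 1: abelian, finitely generated, and
surjecting onto ℤ with finite kernel (i.e. isomorphic to ℤ × (finite)). -/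
def RankOneFGAbelian (A : Type*) [Group A] : Prop :=
  (∀ x y : A, x * y = y * x) ∧ Group.FG A ∧
    ∃ φ : A →* Multiplicative ℤ, Function.Surjective φ ∧ Finite φ.ker

/-- `d`-polycyclic subgroups: `K` is `0`-polycyclic iff trivial, and `(d+1)`-polycyclic
iff it has a normal subgroup `N` which is `d`-polycyclic with `K/N` a finitely
generated abelian group of rank 1. -/
def IsPolycyclicOf {G : Type*} [Group G] : ℕ → Subgroup G → Prop
  | 0, K => K = ⊥
  | d + 1, K => ∃ N : Subgroup G, N ≤ K ∧ ∃ hN : (N.subgroupOf K).Normal,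
      IsPolycyclicOf d N ∧
        (letI := hN; RankOneFGAbelian (↥K ⧸ N.subgroupOf K))

section AuxA

variable {G : Type*} [Group G]

/-- transfer `RankOneFGAbelian` across an isomorphism -/
lemma rankOne_congr {A B : Type*} [Group A] [Group B] (e : A ≃* B)
    (h : RankOneFGAbelian A) : RankOneFGAbelian B := by
  obtain ⟨hcomm, hfg, φ, hsurj, hker⟩ := h
  haveI := hfg
  refine ⟨fun x y => ?_, Group.fg_of_surjective (f := e.toMonoidHom) e.surjective,
    φ.comp e.symm.toMonoidHom, hsurj.comp e.symm.surjective, ?_⟩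
  · have h2 := hcomm (e.symm x) (e.symm y)
    have := congrArg e h2
    simpa [map_mul] using this
  · exact Finite.of_injective
      (fun x : (φ.comp e.symm.toMonoidHom).ker => (⟨e.symm x.1, x.2⟩ : φ.ker))
      (fun a b hab => Subtype.ext (e.symm.injective (congrArg Subtype.val hab)))

/-- extension of f.g. by f.g. is f.g. -/
lemma fg_ext (N : Subgroup G) [N.Normal]
    (h1 : Group.FG N) (h2 : Group.FG (G ⧸ N)) : Group.FG G := by
  obtain ⟨S, hS⟩ := h2.out
  obtain ⟨T, hT⟩ := h1.out
  rw [Group.fg_iff]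
  refine ⟨(fun q : G ⧸ N => Quotient.out q) '' ↑S ∪ Subtype.val '' (↑T : Set N), ?_,
    (S.finite_toSet.image _).union (T.finite_toSet.image _)⟩
  set K := Subgroup.closure
    ((fun q : G ⧸ N => Quotient.out q) '' ↑S ∪ Subtype.val '' (↑T : Set N)) with hK
  have hNK : N ≤ K := by
    have hsub : N.subtype '' (↑T : Set N) ⊆ ↑K :=
      le_trans (Set.subset_union_right) Subgroup.subset_closure
    have hmap : Subgroup.map N.subtype (Subgroup.closure (↑T : Set N)) ≤ K := by
      rw [MonoidHom.map_closure]
      exact Subgroup.closure_le K |>.mpr hsub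
    rw [hT] at hmap
    rw [← Subgroup.range_subtype N, MonoidHom.range_eq_map]
    exact hmap
  have hmapK : Subgroup.map (QuotientGroup.mk' N) K = ⊤ := by
    rw [eq_top_iff, ← hS, Subgroup.closure_le]
    intro q hq
    refine ⟨Quotient.out q, ?_, QuotientGroup.out_eq' q⟩
    exact Subgroup.subset_closure (Or.inl ⟨q, hq, rfl⟩)
  have hcm := Subgroup.comap_map_eq (QuotientGroup.mk' N) K
  rw [hmapK, QuotientGroup.ker_mk'] at hcm
  have htop : K ⊔ N = ⊤ := by simpa using hcm.symm
  rw [← htop]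
  exact le_antisymm le_sup_left (sup_le le_rfl hNK)

/-- finitely many homomorphisms from an f.g. group to a finite monoid -/
lemma finite_monoidHom {M : Type*} [Group.FG G] [Monoid M] [Finite M] :
    Finite (G →* M) := by
  obtain ⟨S, hS⟩ := Group.FG.out (G := G)
  refine Finite.of_injective (fun f => (fun s : (S : Set G) => f s)) ?_
  intro f g h
  have : Set.EqOn f g (S : Set G) := fun x hx => congrFun h ⟨x, hx⟩
  exact MonoidHom.eq_of_eqOn_dense hS this

lemma fg_multiplicative_int : Group.FG (Multiplicative ℤ) := by
  rw [Group.fg_iff]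
  refine ⟨{Multiplicative.ofAdd 1}, ?_, Set.finite_singleton _⟩
  rw [eq_top_iff]
  intro x _
  rw [Subgroup.mem_closure_singleton]
  refine ⟨Multiplicative.toAdd x, ?_⟩
  simp [← ofAdd_zsmul]

lemma rankOne_int : RankOneFGAbelian (Multiplicative ℤ) := by
  refine ⟨mul_comm, fg_multiplicative_int, MonoidHom.id _, Function.surjective_id, ?_⟩
  have h : (MonoidHom.id (Multiplicative ℤ)).ker = ⊥ := by
    ext x; simp [MonoidHom.mem_ker]
  rw [h]
  infer_instance

lemma exists_mulEquiv_int {S : Subgroup (Multiplicative ℤ)} (hS : S.index ≠ 0) :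
    Nonempty (Multiplicative ℤ ≃* S) := by
  have hinf : Infinite S := by
    have hcard := Subgroup.card_mul_index S
    have hz : Nat.card (Multiplicative ℤ) = 0 := by
      simp [Nat.card_eq_zero_of_infinite]
    rw [hz] at hcard
    have h0 : Nat.card S = 0 := by
      rcases Nat.mul_eq_zero.mp hcard with h | h
      · exact h
      · exact absurd h hS
    rcases Nat.card_eq_zero.mp h0 with h | h
    · exact (h.false (1 : S)).elim
    · exact h
  obtain ⟨x, hx⟩ := IsCyclic.exists_generator (α := S)
  have hord : ¬ IsOfFinOrder x := by
    intro hfin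
    have h1 : (Subgroup.zpowers x : Set S) = Set.univ := by
      ext y; simp [hx y]
    have h2 : (Subgroup.zpowers x : Set S).Finite := by
      rw [← hfin.powers_eq_zpowers]
      exact hfin.finite_powers
    rw [h1] at h2
    exact Set.infinite_univ h2
  refine ⟨MulEquiv.ofBijective (zpowersHom S x) ⟨?_, ?_⟩⟩
  · intro a b hab
    have hinj := (injective_zpow_iff_not_isOfFinOrder (x := x)).mpr hord
    have h2 : x ^ (Multiplicative.toAdd a) = x ^ (Multiplicative.toAdd b) := by
      simpa [zpowersHom_apply] using hab
    have h3 := hinj h2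
    exact Multiplicative.toAdd.injective h3
  · intro s
    obtain ⟨n, hn⟩ := Subgroup.mem_zpowers_iff.mp (hx s)
    exact ⟨Multiplicative.ofAdd n, by simpa [zpowersHom_apply] using hn⟩

/-- a finite-index subgroup of a rank-one f.g. abelian group is rank-one f.g. abelian -/
lemma rankOne_of_finiteIndex {A : Type*} [Group A] (h : RankOneFGAbelian A)
    {B : Subgroup A} (hB : B.index ≠ 0) : RankOneFGAbelian B := by
  obtain ⟨hcomm, hfg, φ, hsurj, hker⟩ := h
  set S := B.map φ with hSdef
  have hSindex : S.index ≠ 0 := by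
    intro h0
    apply hB
    have h1 : B ≤ S.comap φ := fun b hb => Subgroup.mem_comap.mpr (Subgroup.mem_map_of_mem φ hb)
    have h2 := Subgroup.index_dvd_of_le h1
    rw [Subgroup.index_comap_of_surjective _ hsurj, h0] at h2
    exact Nat.eq_zero_of_zero_dvd h2
  obtain ⟨eS⟩ := exists_mulEquiv_int hSindex
  have hmem : ∀ b : B, φ (b : A) ∈ S := fun b => Subgroup.mem_map_of_mem φ b.2
  set f : B →* S := MonoidHom.codRestrict (φ.comp B.subtype) S (fun b => hmem b) with hfdef
  have hfsurj : Function.Surjective f := by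
    rintro ⟨s, hs⟩
    obtain ⟨b, hb, rfl⟩ := hs
    exact ⟨⟨b, hb⟩, rfl⟩
  set ψ : B →* Multiplicative ℤ := eS.symm.toMonoidHom.comp f with hψdef
  have hψsurj : Function.Surjective ψ := eS.symm.surjective.comp hfsurj
  have hkerfin : Finite ψ.ker := by
    refine Finite.of_injective (fun x : ψ.ker => (⟨(x.1 : A), ?_⟩ : φ.ker)) ?_
    · have h1 : ψ x.1 = 1 := x.2
      have h2 : f x.1 = 1 := by
        have h1' : eS.symm (f x.1) = 1 := h1
        have h1'' := congrArg eS h1'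
        simpa using h1''
      have h3 := congrArg Subtype.val h2
      exact MonoidHom.mem_ker.mpr h3
    · intro a b hab
      have h4 : (a.1 : A) = (b.1 : A) := by
        have := congrArg Subtype.val hab
        simpa using this
      exact Subtype.ext (Subtype.ext h4)
  have hBfg : Group.FG B := by
    haveI : ψ.ker.Normal := ψ.normal_ker
    haveI := hkerfin
    refine fg_ext ψ.ker Group.fg_of_finite ?_
    have e := QuotientGroup.quotientKerEquivOfSurjective ψ hψsurj
    haveI := fg_multiplicative_int
    exact Group.fg_of_surjective (f := e.symm.toMonoidHom) e.symm.surjective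
  exact ⟨fun x y => Subtype.ext (hcomm x y), hBfg, ψ, hψsurj, hkerfin⟩

end AuxA

section AuxB

variable {G : Type*} [Group G]

/-- the coset space of an index-`n` subgroup, as `Fin n` -/
noncomputable def cosetEquivFin (K : Subgroup G) {n : ℕ} (h : K.index = n) (hn : n ≠ 0) :
    (G ⧸ K) ≃ Fin n :=
  haveI : Finite (G ⧸ K) :=
    Nat.finite_of_card_ne_zero (by rw [← Subgroup.index_eq_card, h]; exact hn)
  Finite.equivFinOfCardEq (by rw [← Subgroup.index_eq_card, h])

/-- data determining an index-`n` subgroup -/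
noncomputable def subgroupFingerprint (K : Subgroup G) {n : ℕ} (h : K.index = n) (hn : n ≠ 0) :
    (G →* Equiv.Perm (Fin n)) × Fin n :=
  let e := cosetEquivFin K h hn
  ⟨{ toFun := fun g => e.permCongr ((MulAction.toPermHom G (G ⧸ K)) g)
     map_one' := by
       ext x
       simp [Equiv.permCongr_apply]
     map_mul' := fun a b => by
       ext x
       simp [Equiv.permCongr_apply, Equiv.Perm.mul_apply, mul_smul] },
   e ((1 : G) : G ⧸ K)⟩

lemma subgroupFingerprint_mem (K : Subgroup G) {n : ℕ} (h : K.index = n) (hn : n ≠ 0) (g : G) :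
    g ∈ K ↔ (subgroupFingerprint K h hn).1 g (subgroupFingerprint K h hn).2
      = (subgroupFingerprint K h hn).2 := by
  have h1 : g ∈ K ↔ g • ((1 : G) : G ⧸ K) = ((1 : G) : G ⧸ K) := by
    rw [← MulAction.mem_stabilizer_iff, MulAction.stabilizer_quotient]
  rw [h1]
  simp [subgroupFingerprint, Equiv.permCongr_apply, EmbeddingLike.apply_eq_iff_eq]

/-- a finitely generated group has finitely many subgroups of index `n` -/
lemma finite_subgroups_of_index [Group.FG G] {n : ℕ} (hn : n ≠ 0) :
    {K : Subgroup G | K.index = n}.Finite := by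
  haveI : Finite (G →* Equiv.Perm (Fin n)) := finite_monoidHom
  rw [← Set.finite_coe_iff]
  refine Finite.of_injective (fun K : {K : Subgroup G // K.index = n} =>
    subgroupFingerprint K.1 K.2 hn) ?_
  intro K L hKL
  have h2 : subgroupFingerprint K.1 K.2 hn = subgroupFingerprint L.1 L.2 hn := hKL
  apply Subtype.ext
  ext g
  rw [subgroupFingerprint_mem K.1 K.2 hn g, subgroupFingerprint_mem L.1 L.2 hn g, h2]

/-- the index of the comap of a subgroup along an isomorphism -/
lemma index_comap_equiv {G' : Type*} [Group G'] (e : G ≃* G') (K : Subgroup G') :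
    (K.comap e.toMonoidHom).index = K.index := by
  rw [Subgroup.index_comap]
  have : e.toMonoidHom.range = ⊤ := MonoidHom.range_eq_top.mpr e.surjective
  rw [this, Subgroup.relIndex_top_right]

lemma relindex_map_equiv {G' : Type*} [Group G'] (e : G ≃* G') (K L : Subgroup G) :
    (K.map e.toMonoidHom).relIndex (L.map e.toMonoidHom) = K.relIndex L := by
  conv_rhs => rw [← Subgroup.comap_map_eq_self_of_injective (f := e.toMonoidHom) e.injective K]
  rw [Subgroup.relIndex_comap]

/-- key `subgroupOf` transitivity: comap along `subgroupOfEquivOfLe` -/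
lemma comap_subgroupOfEquivOfLe {A B C : Subgroup G} (h : B ≤ C) :
    Subgroup.comap (Subgroup.subgroupOfEquivOfLe h).toMonoidHom (A.subgroupOf B)
      = (A.subgroupOf C).subgroupOf (B.subgroupOf C) := by
  ext x
  simp [Subgroup.mem_subgroupOf, Subgroup.mem_comap, Subgroup.subgroupOfEquivOfLe]

lemma map_subgroupOfEquivOfLe {A B C : Subgroup G} (h : B ≤ C) :
    Subgroup.map (Subgroup.subgroupOfEquivOfLe h).toMonoidHom
      ((A.subgroupOf C).subgroupOf (B.subgroupOf C)) = A.subgroupOf B := by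
  rw [← comap_subgroupOfEquivOfLe h]
  exact Subgroup.map_comap_eq_self_of_surjective (Subgroup.subgroupOfEquivOfLe h).surjective _

end AuxB

section AuxC

variable {G : Type*} [Group G]

lemma poly_map {G' : Type*} [Group G'] (f : G →* G') (hf : Function.Injective f) :
    ∀ {d : ℕ} {K : Subgroup G}, IsPolycyclicOf d K → IsPolycyclicOf d (K.map f)
  | 0, K, hK => by
    have h0 : K = ⊥ := hK
    simp only [IsPolycyclicOf, h0, Subgroup.map_bot]
  | d + 1, K, hK => by
    obtain ⟨N, hNK, hNnorm, hpc, hrank⟩ := hK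
    set e := K.equivMapOfInjective f hf with he
    have hmapeq : Subgroup.map e.toMonoidHom (N.subgroupOf K)
        = (N.map f).subgroupOf (K.map f) := by
      ext x
      constructor
      · rintro ⟨y, hy, rfl⟩
        exact Subgroup.mem_subgroupOf.mpr
          ⟨y.1, hy, (K.coe_equivMapOfInjective_apply f hf y).symm⟩
      · intro hx
        obtain ⟨a, ha, hfa⟩ := Subgroup.mem_subgroupOf.mp hx
        have haK : a ∈ K := hNK ha
        refine ⟨⟨a, haK⟩, Subgroup.mem_subgroupOf.mpr ha, ?_⟩
        exact Subtype.ext ((K.coe_equivMapOfInjective_apply f hf ⟨a, haK⟩).trans hfa)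
    have hnorm' : ((N.map f).subgroupOf (K.map f)).Normal := by
      rw [← hmapeq, Subgroup.map_equiv_eq_comap_symm']
      exact hNnorm.comap e.symm.toMonoidHom
    refine ⟨N.map f, Subgroup.map_mono hNK, hnorm', poly_map f hf hpc, ?_⟩
    haveI := hNnorm
    haveI := hnorm'
    exact rankOne_congr (QuotientGroup.congr (N.subgroupOf K)
      ((N.map f).subgroupOf (K.map f)) e hmapeq) hrank

/-- a finite-(relative-)index subgroup of a `d`-polycyclic subgroup is `d`-polycyclic -/
lemma poly_of_relindex : ∀ (d : ℕ) (M K : Subgroup G), K ≤ M → K.relIndex M ≠ 0 →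
    IsPolycyclicOf d M → IsPolycyclicOf d K
  | 0, M, K, hKM, _, hM => by
    have h0 : M = ⊥ := hM
    have : K = ⊥ := le_bot_iff.mp (h0 ▸ hKM)
    exact this
  | d + 1, M, K, hKM, hrel, hM => by
    obtain ⟨N, hNM, hNnorm, hpc, hrank⟩ := hM
    refine ⟨N ⊓ K, inf_le_right, ?_, ?_, ?_⟩
    · -- normality of (N ⊓ K).subgroupOf K
      constructor
      rintro ⟨x, hxK⟩ hx ⟨k, hkK⟩
      rw [Subgroup.mem_subgroupOf] at hx ⊢
      obtain ⟨hxN, -⟩ := hx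
      constructor
      · have := hNnorm.conj_mem ⟨x, hKM hxK⟩ (Subgroup.mem_subgroupOf.mpr hxN)
          ⟨k, hKM hkK⟩
        rw [Subgroup.mem_subgroupOf] at this
        exact this
      · exact K.mul_mem (K.mul_mem hkK hxK) (K.inv_mem hkK)
    · -- polycyclicity of N ⊓ K
      refine poly_of_relindex d N (N ⊓ K) inf_le_left ?_ hpc
      -- relindex (N ⊓ K) N ≠ 0 from relindex K M ≠ 0
      have h1 : (N ⊓ K).relIndex N = K.relIndex N := by
        show ((N ⊓ K).subgroupOf N).index = (K.subgroupOf N).index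
        rw [inf_comm, Subgroup.inf_subgroupOf_right]
      rw [h1]
      intro h0
      exact hrel (Subgroup.relIndex_eq_zero_of_le_right hNM h0)
    · -- rank-one quotient
      haveI := hNnorm
      set ψ : ↥K →* (↥M ⧸ N.subgroupOf M) :=
        (QuotientGroup.mk' (N.subgroupOf M)).comp (Subgroup.inclusion hKM) with hψ
      have hker : ψ.ker = (N ⊓ K).subgroupOf K := by
        ext x
        rw [MonoidHom.mem_ker, Subgroup.mem_subgroupOf]
        rw [hψ, MonoidHom.comp_apply, ← MonoidHom.mem_ker, QuotientGroup.ker_mk']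
        rw [Subgroup.mem_subgroupOf]
        simp [Subgroup.coe_inclusion, Subgroup.mem_inf, x.2]
      have hnorm2 : ((N ⊓ K).subgroupOf K).Normal := by
        rw [← hker]; exact ψ.normal_ker
      -- index of the range
      have hrange : ψ.range.index ≠ 0 := by
        have hle : K.subgroupOf M ≤ ψ.range.comap (QuotientGroup.mk' (N.subgroupOf M)) := by
          rintro ⟨x, hxM⟩ hx
          rw [Subgroup.mem_subgroupOf] at hx
          exact ⟨⟨x, hx⟩, rfl⟩
        have hdvd := Subgroup.index_dvd_of_le hle
        rw [Subgroup.index_comap_of_surjective _ (QuotientGroup.mk'_surjective _)] at hdvd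
        intro h0
        rw [h0] at hdvd
        exact hrel (Nat.eq_zero_of_zero_dvd hdvd)
      have hR : RankOneFGAbelian ψ.range := rankOne_of_finiteIndex hrank hrange
      have e2 : (↥K ⧸ ψ.ker) ≃* ψ.range := QuotientGroup.quotientKerEquivRange ψ
      haveI := hnorm2
      have e3 : (↥K ⧸ ψ.ker) ≃* (↥K ⧸ (N ⊓ K).subgroupOf K) :=
        QuotientGroup.quotientMulEquivOfEq hker
      exact rankOne_congr (e2.symm.trans e3) hR

/-- polycyclic subgroups are finitely generated -/
lemma poly_fg : ∀ (d : ℕ) (K : Subgroup G), IsPolycyclicOf d K → Group.FG K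
  | 0, K, hK => by
    have h0 : K = ⊥ := hK
    subst h0
    infer_instance
  | d + 1, K, hK => by
    obtain ⟨N, hNK, hNnorm, hpc, hrank⟩ := hK
    haveI := hNnorm
    have h1 : Group.FG N := poly_fg d N hpc
    have h2 : Group.FG (N.subgroupOf K) := by
      have e := Subgroup.subgroupOfEquivOfLe hNK
      exact Group.fg_of_surjective (hG := h1) (f := e.symm.toMonoidHom) e.symm.surjective
    exact fg_ext (N.subgroupOf K) h2 hrank.2.1

end AuxC

section Main

open scoped Pointwise

/-- The main induction. -/
lemma main_aux (d : ℕ) : ∀ {G : Type*} [Group G] (H : ℕ → Subgroup G),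
    H 1 = ⊤ → H (2 * d + 2) = ⊥ →
    (∀ i, 1 ≤ i → i ≤ 2 * d + 1 → H (i + 1) ≤ H i) →
    (∀ i, 1 ≤ i → i ≤ 2 * d + 1 → ((H (i + 1)).subgroupOf (H i)).Normal) →
    (∀ i, i ≤ d → Finite (↥(H (2 * i + 1)) ⧸ (H (2 * i + 2)).subgroupOf (H (2 * i + 1)))) →
    (∀ i, 1 ≤ i → i ≤ d → ∃ φ : ↥(H (2 * i)) →* Multiplicative ℤ, Function.Surjective φ ∧
        φ.ker = (H (2 * i + 1)).subgroupOf (H (2 * i))) →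
    ∃ N : Subgroup G, N.Normal ∧ N.FiniteIndex ∧ IsPolycyclicOf d N := by
  induction d with
  | zero =>
    intro G _ H htop hbot hle hnorm hfin hZ
    have hf : Finite (↥(H 1) ⧸ (H 2).subgroupOf (H 1)) := hfin 0 (le_refl 0)
    have hb : H 2 = ⊥ := hbot
    have hfG : Finite G := by
      rw [htop, hb, Subgroup.bot_subgroupOf] at hf
      have e1 := (QuotientGroup.quotientBot (G := ↥(⊤ : Subgroup G))).trans Subgroup.topEquiv
      exact Finite.of_equiv _ e1.toEquiv
    exact ⟨⊥, inferInstance, inferInstance, rfl⟩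
  | succ d ih =>
    intro G _ H htop hbot hle hnorm hfin hZ
    -- monotonicity of the chain
    have hmono : ∀ i j, 1 ≤ i → i ≤ j → j ≤ 2 * d + 4 → H j ≤ H i := by
      intro i j h1 hij hj
      induction j with
      | zero => omega
      | succ j ihj =>
        rcases Nat.eq_or_lt_of_le hij with heq | hlt
        · rw [heq]
        · have h2 : H (j + 1) ≤ H j := hle j (by omega) (by omega)
          exact le_trans h2 (ihj (by omega) (by omega))
    have h32 : H 3 ≤ H 2 := hle 2 (by omega) (by omega)
    -- elementwise normality
    have hnormel : ∀ i, 1 ≤ i → i ≤ 2*d+3 → ∀ a ∈ H i, ∀ x ∈ H (i+1),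
        a * x * a⁻¹ ∈ H (i+1) := by
      intro i h1 h2 a ha x hx
      have h3 := (hnorm i h1 (by omega)).conj_mem ⟨x, hle i h1 (by omega) hx⟩
        (Subgroup.mem_subgroupOf.mpr hx) ⟨a, ha⟩
      rw [Subgroup.mem_subgroupOf] at h3
      exact h3
    -- the relativized chain in H 3
    have htop' : (H 3).subgroupOf (H 3) = ⊤ := Subgroup.subgroupOf_self (H 3)
    have hbot' : (H (2 * d + 2 + 2)).subgroupOf (H 3) = ⊥ := by
      have hb : H (2 * d + 2 + 2) = ⊥ := hbot
      rw [hb, Subgroup.bot_subgroupOf]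
    have hle' : ∀ i, 1 ≤ i → i ≤ 2 * d + 1 →
        (H (i + 1 + 2)).subgroupOf (H 3) ≤ (H (i + 2)).subgroupOf (H 3) := by
      intro i h1 h2 x hx
      exact hle (i + 2) (by omega) (by omega) hx
    have hnorm' : ∀ i, 1 ≤ i → i ≤ 2 * d + 1 →
        (((H (i + 1 + 2)).subgroupOf (H 3)).subgroupOf ((H (i + 2)).subgroupOf (H 3))).Normal := by
      intro i h1 h2
      have hBC : H (i + 2) ≤ H 3 := hmono 3 (i + 2) (by omega) (by omega) (by omega)
      have h3 := (hnorm (i + 2) (by omega) (by omega)).comap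
        (Subgroup.subgroupOfEquivOfLe hBC).toMonoidHom
      rwa [comap_subgroupOfEquivOfLe hBC] at h3
    have hfin' : ∀ i, i ≤ d →
        Finite (↥((H (2 * i + 1 + 2)).subgroupOf (H 3)) ⧸
          ((H (2 * i + 2 + 2)).subgroupOf (H 3)).subgroupOf
            ((H (2 * i + 1 + 2)).subgroupOf (H 3))) := by
      intro i hi
      have hBC : H (2 * i + 3) ≤ H 3 := hmono 3 (2 * i + 3) (by omega) (by omega) (by omega)
      haveI hn1 : ((H (2 * i + 3 + 1)).subgroupOf (H (2 * i + 3))).Normal :=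
        hnorm (2 * i + 3) (by omega) (by omega)
      haveI hn1' : ((H (2 * i + 4)).subgroupOf (H (2 * i + 3))).Normal := hn1
      haveI hn2 : (((H (2 * i + 4)).subgroupOf (H 3)).subgroupOf
          ((H (2 * i + 3)).subgroupOf (H 3))).Normal := by
        have h3 := hn1'.comap (Subgroup.subgroupOfEquivOfLe hBC).toMonoidHom
        rwa [comap_subgroupOfEquivOfLe hBC] at h3
      have e := QuotientGroup.congr
        (((H (2 * i + 4)).subgroupOf (H 3)).subgroupOf ((H (2 * i + 3)).subgroupOf (H 3)))
        ((H (2 * i + 4)).subgroupOf (H (2 * i + 3)))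
        (Subgroup.subgroupOfEquivOfLe hBC) (map_subgroupOfEquivOfLe hBC)
      have hfin0 : Finite (↥(H (2 * i + 3)) ⧸ (H (2 * i + 4)).subgroupOf (H (2 * i + 3))) :=
        hfin (i + 1) (by omega)
      exact Finite.of_equiv _ e.symm.toEquiv
    have hZ' : ∀ i, 1 ≤ i → i ≤ d → ∃ φ : ↥((H (2 * i + 2)).subgroupOf (H 3)) →* Multiplicative ℤ,
        Function.Surjective φ ∧ φ.ker = ((H (2 * i + 1 + 2)).subgroupOf (H 3)).subgroupOf
          ((H (2 * i + 2)).subgroupOf (H 3)) := by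
      intro i h1 hi
      obtain ⟨φ, hsurj, hker⟩ : ∃ φ : ↥(H (2 * i + 2)) →* Multiplicative ℤ,
          Function.Surjective φ ∧ φ.ker = (H (2 * i + 3)).subgroupOf (H (2 * i + 2)) :=
        hZ (i + 1) (by omega) (by omega)
      have hBC : H (2 * i + 2) ≤ H 3 := hmono 3 (2 * i + 2) (by omega) (by omega) (by omega)
      refine ⟨φ.comp (Subgroup.subgroupOfEquivOfLe hBC).toMonoidHom,
        hsurj.comp (Subgroup.subgroupOfEquivOfLe hBC).surjective, ?_⟩
      rw [← MonoidHom.comap_ker, hker, comap_subgroupOfEquivOfLe hBC]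
    obtain ⟨N₀, hN₀norm, hN₀fi, hN₀pc⟩ := ih (G := ↥(H 3))
      (fun i => (H (i + 2)).subgroupOf (H 3)) htop' hbot' hle' hnorm' hfin' hZ'
    haveI := hN₀norm
    haveI := hN₀fi
    -- push N₀ down to G
    set P₁ : Subgroup G := N₀.map (H 3).subtype with hP₁def
    have hP₁le : P₁ ≤ H 3 := by
      rintro x ⟨y, -, rfl⟩
      exact y.2
    have hP₁pc : IsPolycyclicOf d P₁ := poly_map _ (H 3).subtype_injective hN₀pc
    have hP₁so : P₁.subgroupOf (H 3) = N₀ :=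
      Subgroup.comap_map_eq_self_of_injective (f := (H 3).subtype) (H 3).subtype_injective N₀
    -- H 3 is finitely generated
    haveI hfg3 : Group.FG ↥(H 3) := fg_ext N₀ (poly_fg d N₀ hN₀pc) Group.fg_of_finite
    -- the infinite-cyclic quotient at the top
    obtain ⟨φ, hφsurj, hφker⟩ : ∃ φ : ↥(H 2) →* Multiplicative ℤ, Function.Surjective φ ∧
        φ.ker = (H 3).subgroupOf (H 2) := hZ 1 (le_refl 1) (by omega)
    obtain ⟨t, ht⟩ := hφsurj (Multiplicative.ofAdd 1)
    set g : G := (t : G) with hgdef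
    have hg : g ∈ H 2 := t.2
    -- conjugation by elements of H 2 preserves H 3
    have hconj3 : ∀ a ∈ H 2, (H 3).map (MulAut.conj a).toMonoidHom = H 3 := by
      intro a ha
      apply le_antisymm
      · rintro x ⟨y, hy, rfl⟩
        exact hnormel 2 (by omega) (by omega) a ha y hy
      · intro x hx
        refine ⟨a⁻¹ * x * a, ?_, ?_⟩
        · have h4 := hnormel 2 (by omega) (by omega) a⁻¹ ((H 2).inv_mem ha) x hx
          simpa using h4
        · simp [MulAut.conj_apply]
          group
    have hconjcomp : ∀ (a b : G) (K : Subgroup G),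
        (K.map (MulAut.conj b).toMonoidHom).map (MulAut.conj a).toMonoidHom
          = K.map (MulAut.conj (a * b)).toMonoidHom := by
      intro a b K
      rw [Subgroup.map_map]
      congr 1
      ext x
      simp [MulAut.conj_apply]
    have hPkle : ∀ k : ℕ, P₁.map (MulAut.conj (g ^ k)).toMonoidHom ≤ H 3 := by
      intro k
      have h5 := Subgroup.map_mono (f := (MulAut.conj (g ^ k)).toMonoidHom) hP₁le
      rwa [hconj3 _ (pow_mem hg k)] at h5
    have hQindex : ∀ k : ℕ,
        ((P₁.map (MulAut.conj (g ^ k)).toMonoidHom).subgroupOf (H 3)).index = N₀.index := by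
      intro k
      have h5 := relindex_map_equiv (MulAut.conj (g ^ k)) P₁ (H 3)
      rw [hconj3 _ (pow_mem hg k)] at h5
      show (P₁.map (MulAut.conj (g ^ k)).toMonoidHom).relIndex (H 3) = N₀.index
      rw [h5]
      show (P₁.subgroupOf (H 3)).index = N₀.index
      rw [hP₁so]
    -- pigeonhole gives a positive power of g that normalizes P₁
    have hexists : ∃ s : ℕ, 0 < s ∧ P₁.map (MulAut.conj (g ^ s)).toMonoidHom = P₁ := by
      have hfinset : {K : Subgroup ↥(H 3) | K.index = N₀.index}.Finite :=
        finite_subgroups_of_index hN₀fi.index_ne_zero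
      haveI := hfinset.to_subtype
      obtain ⟨k, l, hkl, heq⟩ := Finite.exists_ne_map_eq_of_infinite
        (fun k : ℕ => (⟨(P₁.map (MulAut.conj (g ^ k)).toMonoidHom).subgroupOf (H 3),
          hQindex k⟩ : {K : Subgroup ↥(H 3) | K.index = N₀.index}))
      have heq2 : (P₁.map (MulAut.conj (g ^ k)).toMonoidHom).subgroupOf (H 3)
          = (P₁.map (MulAut.conj (g ^ l)).toMonoidHom).subgroupOf (H 3) :=
        congrArg Subtype.val heq
      have hPeq : P₁.map (MulAut.conj (g ^ k)).toMonoidHom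
          = P₁.map (MulAut.conj (g ^ l)).toMonoidHom := by
        have h1 := congrArg (Subgroup.map (H 3).subtype) heq2
        rwa [Subgroup.subgroupOf_map_subtype, Subgroup.subgroupOf_map_subtype,
          inf_of_le_left (hPkle k), inf_of_le_left (hPkle l)] at h1
      rcases Nat.lt_or_ge k l with hlt | hge
      · refine ⟨l - k, by omega, ?_⟩
        have h2 : (P₁.map (MulAut.conj (g ^ (l - k))).toMonoidHom).map
            (MulAut.conj (g ^ k)).toMonoidHom = P₁.map (MulAut.conj (g ^ k)).toMonoidHom := by
          rw [hconjcomp, ← pow_add, show k + (l - k) = l from by omega]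
          exact hPeq.symm
        exact Subgroup.map_injective (MulAut.conj (g ^ k)).injective h2
      · have hlt : l < k := by omega
        refine ⟨k - l, by omega, ?_⟩
        have h2 : (P₁.map (MulAut.conj (g ^ (k - l))).toMonoidHom).map
            (MulAut.conj (g ^ l)).toMonoidHom = P₁.map (MulAut.conj (g ^ l)).toMonoidHom := by
          rw [hconjcomp, ← pow_add, show l + (k - l) = k from by omega]
          exact hPeq
        exact Subgroup.map_injective (MulAut.conj (g ^ l)).injective h2
    obtain ⟨s, hs, hu⟩ := hexists
    set u : G := g ^ s with hudef
    have huH2 : u ∈ H 2 := pow_mem hg s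
    set P : Subgroup G := P₁ ⊔ Subgroup.zpowers u with hPdef
    have hP12 : P₁ ≤ H 2 := le_trans hP₁le h32
    have hPle2 : P ≤ H 2 := sup_le hP12 (Subgroup.zpowers_le.mpr huH2)
    have hP₁P : P₁ ≤ P := le_sup_left
    have huP : u ∈ P := (le_sup_right : Subgroup.zpowers u ≤ P) (Subgroup.mem_zpowers u)
    have hunorm : ∀ x : G, x ∈ P₁ ↔ u * x * u⁻¹ ∈ P₁ := by
      intro x
      constructor
      · intro hx
        have h5 : u * x * u⁻¹ ∈ Subgroup.map (MulAut.conj u).toMonoidHom P₁ :=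
          ⟨x, hx, by simp [MulAut.conj_apply]⟩
        rwa [hu] at h5
      · intro hx
        have hx2 : u * x * u⁻¹ ∈ Subgroup.map (MulAut.conj u).toMonoidHom P₁ := by
          rw [hu]; exact hx
        obtain ⟨y, hy, hyx⟩ := hx2
        have h6 : u * y * u⁻¹ = u * x * u⁻¹ := by simpa [MulAut.conj_apply] using hyx
        have h7 : y = x := mul_left_cancel (mul_right_cancel h6)
        rwa [← h7]
    have hPnormalizer : P ≤ Subgroup.normalizer (P₁ : Set G) := by
      refine sup_le Subgroup.le_normalizer ?_
      have hun : u ∈ Subgroup.normalizer (P₁ : Set G) := Subgroup.mem_normalizer_iff.mpr (fun y => hunorm y)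
      exact Subgroup.zpowers_le.mpr hun
    haveI hnormP : (P₁.subgroupOf P).Normal := by
      constructor
      rintro ⟨x, hxP⟩ hx ⟨p, hpP⟩
      rw [Subgroup.mem_subgroupOf] at hx ⊢
      exact (Subgroup.mem_normalizer_iff.mp (hPnormalizer hpP) x).mp hx
    set u' : ↥P := ⟨u, huP⟩ with hu'def
    have hsupP : P₁.subgroupOf P ⊔ Subgroup.zpowers u' = ⊤ := by
      apply Subgroup.map_injective (Subgroup.subtype_injective P)
      rw [Subgroup.map_sup, Subgroup.subgroupOf_map_subtype, MonoidHom.map_zpowers,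
        inf_of_le_left hP₁P]
      have hT : Subgroup.map P.subtype ⊤ = P := by
        rw [← MonoidHom.range_eq_map, Subgroup.range_subtype]
      rw [hT]
      rfl
    set ψ : ↥P →* Multiplicative ℤ := φ.comp (Subgroup.inclusion hPle2) with hψdef
    have hψu : ψ u' = Multiplicative.ofAdd (s : ℤ) := by
      have h1 : Subgroup.inclusion hPle2 u' = (⟨u, huH2⟩ : ↥(H 2)) := rfl
      have h2 : (⟨u, huH2⟩ : ↥(H 2)) = t ^ s := by
        apply Subtype.ext
        push_cast
        rfl
      show φ (Subgroup.inclusion hPle2 u') = _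
      rw [h1, h2, map_pow, ht, ← ofAdd_nsmul]
      simp
    have hψP₁ : ∀ x : ↥P, (x : G) ∈ P₁ → ψ x = 1 := by
      intro x hx
      have h3 : (x : G) ∈ H 3 := hP₁le hx
      have h4 : Subgroup.inclusion hPle2 x ∈ φ.ker := by
        rw [hφker, Subgroup.mem_subgroupOf]
        exact h3
      exact h4
    have hdecomp : ∀ x : ↥P, ∃ (p : ↥P) (m : ℤ), (p : G) ∈ P₁ ∧ x = p * u' ^ m := by
      intro x
      have hxs : x ∈ ((P₁.subgroupOf P : Set ↥P) * (Subgroup.zpowers u' : Set ↥P)) := by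
        rw [← Subgroup.normal_mul, hsupP]
        trivial
      obtain ⟨p, hp, w, hw, hpw⟩ := hxs
      obtain ⟨m, hm⟩ := Subgroup.mem_zpowers_iff.mp hw
      exact ⟨p, m, hp, by rw [← hpw, ← hm]⟩
    have hψdecomp : ∀ (p : ↥P) (m : ℤ), (p : G) ∈ P₁ →
        ψ (p * u' ^ m) = Multiplicative.ofAdd (m * (s : ℤ)) := by
      intro p m hp
      rw [map_mul, hψP₁ p hp, one_mul, map_zpow, hψu, ← ofAdd_zsmul]
      simp [mul_comm]
    have hkerψ : ψ.ker = P₁.subgroupOf P := by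
      apply le_antisymm
      · intro x hx
        have hx1 : ψ x = 1 := hx
        obtain ⟨p, m, hp, rfl⟩ := hdecomp x
        rw [hψdecomp p m hp] at hx1
        have hms : m * (s : ℤ) = 0 := by
          have h8 := congrArg Multiplicative.toAdd hx1
          simp only [toAdd_ofAdd, toAdd_one] at h8
          exact h8
        have hm0 : m = 0 := by
          rcases mul_eq_zero.mp hms with h | h
          · exact h
          · exfalso; have : (s : ℤ) ≠ 0 := by exact_mod_cast Nat.pos_iff_ne_zero.mp hs
            exact this h
        rw [Subgroup.mem_subgroupOf]
        rw [hm0, zpow_zero, mul_one]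
        exact hp
      · intro x hx
        exact MonoidHom.mem_ker.mpr (hψP₁ x (Subgroup.mem_subgroupOf.mp hx))
    have hrangeψ : ψ.range = Subgroup.zpowers (Multiplicative.ofAdd (s : ℤ)) := by
      apply le_antisymm
      · rintro _ ⟨x, rfl⟩
        obtain ⟨p, m, hp, rfl⟩ := hdecomp x
        rw [hψdecomp p m hp]
        refine Subgroup.mem_zpowers_iff.mpr ⟨m, ?_⟩
        rw [← ofAdd_zsmul]
        simp [mul_comm]
      · rintro y hy
        obtain ⟨m, hm⟩ := Subgroup.mem_zpowers_iff.mp hy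
        exact ⟨u' ^ m, by rw [map_zpow, hψu, hm]⟩
    -- finiteness of ℤ / sℤ
    have hSind : (Subgroup.zpowers (Multiplicative.ofAdd (s : ℤ))).index ≠ 0 := by
      haveI : NeZero s := ⟨Nat.pos_iff_ne_zero.mp hs⟩
      haveI : Finite (Multiplicative ℤ ⧸ Subgroup.zpowers (Multiplicative.ofAdd (s : ℤ))) := by
        refine Finite.of_injective (fun q : Multiplicative ℤ ⧸
            Subgroup.zpowers (Multiplicative.ofAdd (s : ℤ)) =>
          Quotient.liftOn' q (fun x => ((Multiplicative.toAdd x : ℤ) : ZMod s)) ?_) ?_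
        · intro a b hab
          have hab' : a⁻¹ * b ∈ Subgroup.zpowers (Multiplicative.ofAdd (s : ℤ)) :=
            QuotientGroup.leftRel_apply.mp hab
          obtain ⟨m, hm⟩ := Subgroup.mem_zpowers_iff.mp hab'
          have hm' : m * (s : ℤ) = Multiplicative.toAdd b - Multiplicative.toAdd a := by
            have h8 := congrArg Multiplicative.toAdd hm
            simp only [toAdd_zpow, toAdd_ofAdd, toAdd_mul, toAdd_inv, smul_eq_mul] at h8
            omega
          have h9 : ((Multiplicative.toAdd b - Multiplicative.toAdd a : ℤ) : ZMod s) = 0 := by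
            rw [← hm']
            push_cast
            simp [ZMod.natCast_self]
          push_cast at h9
          have h10 := sub_eq_zero.mp h9
          exact h10.symm
        · intro q1 q2
          refine Quotient.inductionOn₂' q1 q2 (fun a b hq => ?_)
          have hq' : ((Multiplicative.toAdd a : ℤ) : ZMod s)
              = ((Multiplicative.toAdd b : ℤ) : ZMod s) := hq
          have h11 : ((Multiplicative.toAdd b - Multiplicative.toAdd a : ℤ) : ZMod s) = 0 := by
            push_cast
            rw [hq']
            ring
          have h12 : (s : ℤ) ∣ (Multiplicative.toAdd b - Multiplicative.toAdd a) :=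
            (ZMod.intCast_zmod_eq_zero_iff_dvd _ _).mp h11
          obtain ⟨c, hc⟩ := h12
          apply Quotient.sound'
          rw [QuotientGroup.leftRel_apply]
          refine Subgroup.mem_zpowers_iff.mpr ⟨c, ?_⟩
          apply Multiplicative.toAdd.injective
          simp only [toAdd_zpow, toAdd_ofAdd, toAdd_mul, toAdd_inv, smul_eq_mul]
          rw [mul_comm]
          omega
      exact (Subgroup.finiteIndex_of_finite_quotient).index_ne_zero
    -- the quotient P / P₁ is rank-one f.g. abelian
    have hrankP : RankOneFGAbelian (↥P ⧸ P₁.subgroupOf P) := by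
      obtain ⟨eZ⟩ := exists_mulEquiv_int hSind
      have hR : RankOneFGAbelian ↥(Subgroup.zpowers (Multiplicative.ofAdd (s : ℤ))) :=
        rankOne_congr eZ rankOne_int
      have hR2 : RankOneFGAbelian ↥ψ.range :=
        rankOne_congr (MulEquiv.subgroupCongr hrangeψ).symm hR
      have e2 := QuotientGroup.quotientKerEquivRange ψ
      haveI : ψ.ker.Normal := ψ.normal_ker
      have e3 : (↥P ⧸ ψ.ker) ≃* (↥P ⧸ P₁.subgroupOf P) :=
        QuotientGroup.quotientMulEquivOfEq hkerψ
      exact rankOne_congr (e2.symm.trans e3) hR2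
    have hPpc : IsPolycyclicOf (d + 1) P := ⟨P₁, hP₁P, hnormP, hP₁pc, hrankP⟩
    -- now show P has finite index in G
    haveI hAnorm : ((H 3).subgroupOf (H 2)).Normal := hφker ▸ φ.normal_ker
    have hVind : (((H 3).subgroupOf (H 2)) ⊔ P.subgroupOf (H 2)).index ≠ 0 := by
      have hkerle : φ.ker ≤ ((H 3).subgroupOf (H 2)) ⊔ P.subgroupOf (H 2) := by
        rw [hφker]; exact le_sup_left
      have hcm : ((H 3).subgroupOf (H 2)) ⊔ P.subgroupOf (H 2)
          = Subgroup.comap φ (Subgroup.map φ (((H 3).subgroupOf (H 2))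
            ⊔ P.subgroupOf (H 2))) := by
        rw [Subgroup.comap_map_eq, sup_of_le_left hkerle]
      rw [hcm, Subgroup.index_comap_of_surjective _ hφsurj]
      have huX : (t ^ s : ↥(H 2)) ∈ P.subgroupOf (H 2) := by
        rw [Subgroup.mem_subgroupOf]
        have h13 : ((t ^ s : ↥(H 2)) : G) = u := by push_cast; rfl
        rw [h13]; exact huP
      have hzle : Subgroup.zpowers (Multiplicative.ofAdd (s : ℤ))
          ≤ Subgroup.map φ (((H 3).subgroupOf (H 2)) ⊔ P.subgroupOf (H 2)) := by
        rw [Subgroup.zpowers_le]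
        refine ⟨t ^ s, (le_sup_right : P.subgroupOf (H 2) ≤ _) huX, ?_⟩
        rw [map_pow, ht, ← ofAdd_nsmul]
        simp
      intro h0
      have hdvd := Subgroup.index_dvd_of_le hzle
      rw [h0] at hdvd
      exact hSind (Nat.eq_zero_of_zero_dvd hdvd)
    have hfinA : Finite (↥((H 3).subgroupOf (H 2)) ⧸
        (P.subgroupOf (H 2) ⊓ (H 3).subgroupOf (H 2)).subgroupOf ((H 3).subgroupOf (H 2))) := by
      have h1 : ((P₁.subgroupOf (H 2)).subgroupOf ((H 3).subgroupOf (H 2))).index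
          = (P₁.subgroupOf (H 3)).index := by
        rw [← comap_subgroupOfEquivOfLe (A := P₁) h32]
        exact index_comap_equiv _ _
      have h2 : ((P₁.subgroupOf (H 2)).subgroupOf ((H 3).subgroupOf (H 2))).index ≠ 0 := by
        rw [h1, hP₁so]; exact hN₀fi.index_ne_zero
      have hle2 : P₁.subgroupOf (H 2) ≤ P.subgroupOf (H 2) ⊓ (H 3).subgroupOf (H 2) := by
        intro x hx
        rw [Subgroup.mem_subgroupOf] at hx
        exact ⟨Subgroup.mem_subgroupOf.mpr (hP₁P hx), Subgroup.mem_subgroupOf.mpr (hP₁le hx)⟩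
      have hle3 := Subgroup.comap_mono (f := ((H 3).subgroupOf (H 2)).subtype) hle2
      have h3 := Subgroup.index_dvd_of_le hle3
      have h4 : ((P.subgroupOf (H 2) ⊓ (H 3).subgroupOf (H 2)).subgroupOf
          ((H 3).subgroupOf (H 2))).index ≠ 0 := by
        intro h0
        exact h2 (Nat.eq_zero_of_zero_dvd (h0 ▸ h3))
      exact Nat.finite_of_card_ne_zero (by rw [← Subgroup.index_eq_card]; exact h4)
    have hfinV : Finite (↥(((H 3).subgroupOf (H 2)) ⊔ P.subgroupOf (H 2)) ⧸
        (P.subgroupOf (H 2)).subgroupOf (((H 3).subgroupOf (H 2))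
          ⊔ P.subgroupOf (H 2))) := by
      haveI := hfinA
      have hAV : (H 3).subgroupOf (H 2) ≤ ((H 3).subgroupOf (H 2)) ⊔ P.subgroupOf (H 2) :=
        le_sup_left
      refine Finite.of_surjective
        (f := fun (q : ↥((H 3).subgroupOf (H 2)) ⧸
            (P.subgroupOf (H 2) ⊓ (H 3).subgroupOf (H 2)).subgroupOf ((H 3).subgroupOf (H 2))) =>
          (Quotient.liftOn' q (fun a => (QuotientGroup.mk (Subgroup.inclusion hAV a) :
            ↥(((H 3).subgroupOf (H 2)) ⊔ P.subgroupOf (H 2)) ⧸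
            (P.subgroupOf (H 2)).subgroupOf (((H 3).subgroupOf (H 2))
              ⊔ P.subgroupOf (H 2)))) ?_)) ?_
      · intro a b hab
        have hab' := QuotientGroup.leftRel_apply.mp hab
        rw [Subgroup.mem_subgroupOf] at hab'
        rw [QuotientGroup.eq, Subgroup.mem_subgroupOf]
        exact hab'.1
      · intro q
        refine QuotientGroup.induction_on q (fun v => ?_)
        have hv : (v : ↥(H 2)) ∈ ((((H 3).subgroupOf (H 2)) : Subgroup ↥(H 2)) : Set ↥(H 2))
            * ((P.subgroupOf (H 2) : Subgroup ↥(H 2)) : Set ↥(H 2)) := by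
          rw [← Subgroup.normal_mul]
          exact v.2
        obtain ⟨a, ha, x, hx, haxv⟩ := hv
        refine ⟨Quotient.mk'' ⟨a, ha⟩, ?_⟩
        show QuotientGroup.mk _ = QuotientGroup.mk v
        rw [QuotientGroup.eq, Subgroup.mem_subgroupOf]
        show ((Subgroup.inclusion hAV (⟨a, ha⟩ : ↥((H 3).subgroupOf (H 2))) :
            ↥(((H 3).subgroupOf (H 2)) ⊔ P.subgroupOf (H 2))) : ↥(H 2))⁻¹
          * (v : ↥(H 2)) ∈ P.subgroupOf (H 2)
        have hcoe : ((Subgroup.inclusion hAV (⟨a, ha⟩ : ↥((H 3).subgroupOf (H 2))) :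
            ↥(((H 3).subgroupOf (H 2)) ⊔ P.subgroupOf (H 2))) : ↥(H 2)) = a := rfl
        rw [hcoe]
        have h14 : a⁻¹ * (v : ↥(H 2)) = x := by rw [← haxv]; group
        rw [h14]
        exact hx
    have hXVind : ((P.subgroupOf (H 2)).subgroupOf (((H 3).subgroupOf (H 2))
        ⊔ P.subgroupOf (H 2))).index ≠ 0 := by
      haveI := hfinV
      exact (Subgroup.finiteIndex_of_finite_quotient).index_ne_zero
    have hXind : (P.subgroupOf (H 2)).index ≠ 0 := by
      have hm := Subgroup.relIndex_mul_index
        (le_sup_right : P.subgroupOf (H 2) ≤ ((H 3).subgroupOf (H 2)) ⊔ P.subgroupOf (H 2))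
      intro h0
      rw [h0] at hm
      rcases Nat.mul_eq_zero.mp hm with h | h
      · exact hXVind h
      · exact hVind h
    have hH2fin : Finite (G ⧸ H 2) := by
      haveI hf1 : Finite (↥(H 1) ⧸ (H 2).subgroupOf (H 1)) := hfin 0 (by omega)
      refine Finite.of_surjective
        (f := fun (q : ↥(H 1) ⧸ (H 2).subgroupOf (H 1)) =>
          (Quotient.liftOn' q (fun x => (QuotientGroup.mk (x : G) : G ⧸ H 2)) ?_)) ?_
      · intro a b hab
        have hab' := QuotientGroup.leftRel_apply.mp hab
        rw [QuotientGroup.eq]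
        exact Subgroup.mem_subgroupOf.mp hab'
      · intro q
        refine QuotientGroup.induction_on q (fun v => ?_)
        exact ⟨Quotient.mk'' ⟨v, htop ▸ Subgroup.mem_top v⟩, rfl⟩
    have hH2ind : (H 2).index ≠ 0 := by
      haveI := hH2fin
      exact (Subgroup.finiteIndex_of_finite_quotient).index_ne_zero
    have hPind : P.index ≠ 0 := by
      have hm := Subgroup.relIndex_mul_index hPle2
      intro h0
      rw [h0] at hm
      rcases Nat.mul_eq_zero.mp hm with h | h
      · exact hXind h
      · exact hH2ind h
    haveI hPfi : P.FiniteIndex := ⟨hPind⟩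
    haveI hcorefi : P.normalCore.FiniteIndex := inferInstance
    refine ⟨P.normalCore, inferInstance, hcorefi, ?_⟩
    refine poly_of_relindex (d + 1) P P.normalCore P.normalCore_le ?_ hPpc
    have hm := Subgroup.relIndex_mul_index P.normalCore_le
    have hcore : P.normalCore.index ≠ 0 := hcorefi.index_ne_zero
    intro h0
    rw [h0, zero_mul] at hm
    exact hcore hm.symm

end Main

/-- Every almost `d`-polycyclic group (a group with a subnormal chain
`G = H₁ ⊵ H₂ ⊵ ⋯ ⊵ H_{2d+2} = 1` whose successive quotients alternate between finite
groups and copies of ℤ, with `d` infinite cyclic factors) has a `d`-polycyclic normal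
subgroup of finite index.  The isomorphism `H_j/H_{j+1} ≅ ℤ` is expressed via a
surjective homomorphism `H_j →* ℤ` with kernel `H_{j+1}`. -/
theorem almost_polycyclic_has_polycyclic_finite_index
    {G : Type*} [Group G] (d : ℕ) (H : ℕ → Subgroup G)
    (htop : H 1 = ⊤) (hbot : H (2 * d + 2) = ⊥)
    (hle : ∀ i, 1 ≤ i → i ≤ 2 * d + 1 → H (i + 1) ≤ H i)
    (hnorm : ∀ i, 1 ≤ i → i ≤ 2 * d + 1 → ((H (i + 1)).subgroupOf (H i)).Normal)
    (hfin : ∀ i, i ≤ d →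
      Finite (↥(H (2 * i + 1)) ⧸ (H (2 * i + 2)).subgroupOf (H (2 * i + 1))))
    (hZ : ∀ i, 1 ≤ i → i ≤ d →
      ∃ φ : ↥(H (2 * i)) →* Multiplicative ℤ, Function.Surjective φ ∧
        φ.ker = (H (2 * i + 1)).subgroupOf (H (2 * i))) :
    ∃ N : Subgroup G, N.Normal ∧ N.FiniteIndex ∧ IsPolycyclicOf d N := by
  exact main_aux d H htop hbot hle hnorm hfin hZ
end

section
/- Let E be a finitely generated group and N a normal subgroup of E such that E/N is finitely presented. Then N is finitely generated as a normal subgroup of E, i.e. N is the normal closure in E of some finite subset of N. -/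
/-- A group is finitely presented if it is the quotient of a finitely generated free
group by the normal closure of a finite set of relators. -/
def GroupFinitelyPresented (Q : Type*) [Group Q] : Prop :=
  ∃ (m : ℕ) (rels : Finset (FreeGroup (Fin m))) (φ : FreeGroup (Fin m) →* Q),
    Function.Surjective φ ∧
      φ.ker = Subgroup.normalClosure (rels : Set (FreeGroup (Fin m)))

/-- If `E` is finitely generated and `N ⊴ E` with `E/N` finitely presented, then `N`
is the normal closure in `E` of a finite subset of `N`. -/
theorem normal_subgroup_fg_as_normal_subgroup {E : Type*} [Group E]
    (hE : Group.FG E) (N : Subgroup E) (hN : N.Normal)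
    (hQ : GroupFinitelyPresented (E ⧸ N)) :
    ∃ S : Finset E, (S : Set E) ⊆ (N : Set E) ∧
      Subgroup.normalClosure (S : Set E) = N := by
  classical
  obtain ⟨m, rels, φ, hφs, hφker⟩ := hQ
  obtain ⟨_, T, _, hT⟩ := Group.fg_iff'.mp hE
  set q : E →* E ⧸ N := QuotientGroup.mk' N with hq
  have hqs : Function.Surjective q := QuotientGroup.mk'_surjective N
  have hmem : ∀ x : E, x ∈ N ↔ q x = 1 := by
    intro x
    exact ((QuotientGroup.eq_one_iff x).symm)
  -- lift φ through q
  let ψ : FreeGroup (Fin m) →* E :=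
    FreeGroup.lift fun i => Function.surjInv hqs (φ (FreeGroup.of i))
  have hcomm : ∀ w, q (ψ w) = φ w := by
    have : q.comp ψ = φ := by
      ext i
      simp [ψ, Function.surjInv_eq hqs]
    intro w
    rw [← this]; rfl
  -- words representing generators
  let w : E → FreeGroup (Fin m) := fun t => Function.surjInv hφs (q t)
  have hw : ∀ t, φ (w t) = q t := fun t => Function.surjInv_eq hφs (q t)
  -- the finite set
  set S : Finset E :=
    rels.image ψ ∪ T.image (fun t => t * (ψ (w t))⁻¹) with hS
  have hSN : (S : Set E) ⊆ (N : Set E) := by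
    intro x hx
    simp only [hS, Finset.coe_union, Finset.coe_image, Set.mem_union, Set.mem_image,
      Finset.mem_coe] at hx
    rcases hx with ⟨r, hr, rfl⟩ | ⟨t, _, rfl⟩
    · have : r ∈ φ.ker := hφker ▸ Subgroup.subset_normalClosure hr
      exact (hmem _).mpr (by rw [hcomm]; exact this)
    · refine (hmem _).mpr ?_
      rw [map_mul, map_inv, hcomm, hw, mul_inv_cancel]
  set M : Subgroup E := Subgroup.normalClosure (S : Set E) with hM
  have hMN : M ≤ N := Subgroup.normalClosure_le_normal hSN
  refine ⟨S, hSN, le_antisymm hMN ?_⟩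
  -- range ψ ⊔ M = ⊤
  have htop : ψ.range ⊔ M = ⊤ := by
    rw [eq_top_iff, ← hT, Subgroup.closure_le]
    intro t ht
    have h1 : t * (ψ (w t))⁻¹ ∈ M :=
      Subgroup.subset_normalClosure (by
        simp only [hS, Finset.coe_union, Finset.coe_image, Set.mem_union, Set.mem_image,
          Finset.mem_coe]
        exact Or.inr ⟨t, ht, rfl⟩)
    have h2 : ψ (w t) ∈ ψ.range := ⟨w t, rfl⟩
    have : t = (t * (ψ (w t))⁻¹) * ψ (w t) := by group
    rw [this]
    exact mul_mem (Subgroup.mem_sup_right h1) (Subgroup.mem_sup_left h2)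
  -- ψ maps ker φ into M
  have hψker : ∀ u ∈ φ.ker, ψ u ∈ M := by
    intro u hu
    rw [hφker] at hu
    have : Subgroup.normalClosure (rels : Set (FreeGroup (Fin m))) ≤ M.comap ψ := by
      have : (M.comap ψ).Normal := Subgroup.Normal.comap (Subgroup.normalClosure_normal) ψ
      refine Subgroup.normalClosure_le_normal ?_
      intro r hr
      exact Subgroup.subset_normalClosure (by
        simp only [hS, Finset.coe_union, Finset.coe_image, Set.mem_union, Set.mem_image,
          Finset.mem_coe]
        exact Or.inl ⟨r, hr, rfl⟩)
    exact this hu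
  -- finish
  intro n hn
  have : n ∈ ψ.range ⊔ M := htop ▸ Subgroup.mem_top n
  rw [← SetLike.mem_coe, Subgroup.mul_normal ψ.range M] at this
  obtain ⟨h, hh, m', hm', rfl⟩ := this
  obtain ⟨u, rfl⟩ := hh
  have hqm : q m' = 1 := (hmem m').mp (hMN hm')
  have hqn : q (ψ u * m') = 1 := (hmem _).mp hn
  have hu : u ∈ φ.ker := by
    rw [MonoidHom.mem_ker, ← hcomm]
    rw [map_mul, hqm, mul_one] at hqn
    exact hqn
  exact mul_mem (hψker u hu) hm'
end

section
/- Every discrete subgroup of the topological group ℝⁿ × (ℝ/ℤ)ᵐ is finitely generated; in fact it admits a generating set of at most n + m elements. -/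
set_option maxHeartbeats 1000000
set_option synthInstance.maxHeartbeats 400000

open Module

/-- The componentwise quotient map `ℝᵐ → (ℝ/ℤ)ᵐ` as an additive group hom. -/
noncomputable def qmap (m : ℕ) : (Fin m → ℝ) →+ (Fin m → AddCircle (1:ℝ)) where
  toFun v := fun i => (v i : AddCircle (1:ℝ))
  map_zero' := by ext i; simp
  map_add' a b := by ext i; simp

/-- The covering map `ℝⁿ × ℝᵐ → ℝⁿ × (ℝ/ℤ)ᵐ`. -/
noncomputable def phi (n m : ℕ) :
    ((Fin n → ℝ) × (Fin m → ℝ)) →+ ((Fin n → ℝ) × (Fin m → AddCircle (1:ℝ))) :=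
  (AddMonoidHom.id _).prodMap (qmap m)

theorem phi_cont (n m : ℕ) : Continuous (phi n m) := by
  show Continuous (Prod.map id (qmap m))
  apply Continuous.prodMap continuous_id
  exact continuous_pi fun i => (AddCircle.continuous_mk' _).comp (continuous_apply i)

theorem phi_surj (n m : ℕ) : Function.Surjective (phi n m) := by
  rintro ⟨a, b⟩
  choose c hc using fun i => QuotientAddGroup.mk_surjective (b i)
  exact ⟨(a, c), by simp [phi, qmap]; exact funext hc⟩

theorem phi_ker (n m : ℕ) (v : (Fin n → ℝ) × (Fin m → ℝ)) (hv : ‖v‖ < 1/2)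
    (h : phi n m v = 0) : v = 0 := by
  obtain ⟨x, y⟩ := v
  have hx : x = 0 := congrArg Prod.fst h
  have hy : (fun i => ((y i : AddCircle (1:ℝ)))) = 0 := congrArg Prod.snd h
  refine Prod.ext hx ?_
  funext i
  have h1 : (y i : AddCircle (1:ℝ)) = 0 := congrFun hy i
  rw [AddCircle.coe_eq_zero_iff] at h1
  obtain ⟨k, hk⟩ := h1
  have h2 : |y i| < 1/2 :=
    lt_of_le_of_lt (le_trans (norm_le_pi_norm y i) (norm_snd_le (x, y))) hv
  have : k = 0 := by
    by_contra hk0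
    have h3 : (1:ℤ) ≤ |k| := Int.one_le_abs hk0
    have : (1:ℝ) ≤ |y i| := by
      rw [← hk, zsmul_eq_mul, mul_one]
      rw [← Int.cast_abs]
      exact_mod_cast h3
    linarith
  simp [this] at hk
  exact hk.symm

theorem preimage_discrete (n m : ℕ)
    (D : AddSubgroup ((Fin n → ℝ) × (Fin m → AddCircle (1 : ℝ))))
    (hD : DiscreteTopology D) :
    DiscreteTopology (D.comap (phi n m)) := by
  rw [discreteTopology_iff_isOpen_singleton_zero] at hD ⊢
  obtain ⟨W, hW, hWD⟩ := isOpen_induced_iff.mp hD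
  have h0W : (0 : (Fin n → ℝ) × (Fin m → AddCircle (1:ℝ))) ∈ W := by
    have : (0 : D) ∈ (Subtype.val ⁻¹' W : Set D) := by rw [hWD]; rfl
    exact this
  rw [isOpen_induced_iff]
  refine ⟨Metric.ball 0 (1/2) ∩ (phi n m) ⁻¹' W,
    (Metric.isOpen_ball).inter (hW.preimage (phi_cont n m)), ?_⟩
  ext ⟨v, hv⟩
  simp only [Set.mem_preimage, Set.mem_inter_iff, Metric.mem_ball, Set.mem_singleton_iff]
  constructor
  · rintro ⟨hball, hWv⟩
    have hphi0 : phi n m v = 0 := by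
      have : (⟨phi n m v, hv⟩ : D) ∈ (Subtype.val ⁻¹' W : Set D) := hWv
      rw [hWD] at this
      exact congrArg Subtype.val this
    have : v = 0 := phi_ker n m v (by simpa [dist_zero_right] using hball) hphi0
    exact Subtype.ext this
  · intro h
    have : v = 0 := congrArg Subtype.val h
    subst this
    refine ⟨by simp, by simpa using h0W⟩

/-- Rank bound for a discrete submodule of a finite-dimensional real vector space. -/
theorem finrank_le_of_discrete {E : Type*} [NormedAddCommGroup E]
    [NormedSpace ℝ E] [FiniteDimensional ℝ E] (L : Submodule ℤ E) [DiscreteTopology L] :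
    finrank ℤ L ≤ finrank ℝ E := by
  let f := (Submodule.span ℝ (L : Set E)).subtype
  let L₀ := L.comap (f.restrictScalars ℤ)
  have h_img : Submodule.map (f.restrictScalars ℤ) L₀ = L := by
    rw [Submodule.map_comap_eq_self]
    intro x hx
    exact LinearMap.mem_range.mpr ⟨⟨x, Submodule.subset_span hx⟩, rfl⟩
  have hdisc : DiscreteTopology L₀ := by
    refine DiscreteTopology.preimage_of_continuous_injective (L : Set E) ?_
      (Submodule.injective_subtype _)
    exact LinearMap.continuous_of_finiteDimensional f
  have hlat : IsZLattice ℝ L₀ := ⟨by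
    rw [← (Submodule.map_injective_of_injective (Submodule.injective_subtype _)).eq_iff,
      Submodule.map_span, Submodule.map_top, Submodule.range_subtype]
    exact congrArg (Submodule.span ℝ) (congrArg SetLike.coe h_img)⟩
  have e := Submodule.equivMapOfInjective (f.restrictScalars ℤ)
      (Submodule.injective_subtype _) L₀
  rw [h_img] at e
  rw [← e.finrank_eq, ZLattice.rank ℝ L₀]
  exact Submodule.finrank_le _

/-- Every discrete subgroup of `ℝⁿ × (ℝ/ℤ)ᵐ` is finitely generated, by at most
`n + m` elements. -/
theorem discrete_subgroup_fg (n m : ℕ)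
    (D : AddSubgroup ((Fin n → ℝ) × (Fin m → AddCircle (1 : ℝ))))
    (hD : DiscreteTopology D) :
    ∃ S : Finset ((Fin n → ℝ) × (Fin m → AddCircle (1 : ℝ))),
      (↑S : Set ((Fin n → ℝ) × (Fin m → AddCircle (1 : ℝ)))) ⊆
          (D : Set ((Fin n → ℝ) × (Fin m → AddCircle (1 : ℝ)))) ∧
        AddSubgroup.closure (↑S : Set ((Fin n → ℝ) × (Fin m → AddCircle (1 : ℝ)))) = D ∧
        S.card ≤ n + m := by
  classical
  set D' : AddSubgroup ((Fin n → ℝ) × (Fin m → ℝ)) := D.comap (phi n m) with hD'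
  have hdisc : DiscreteTopology D' := preimage_discrete n m D hD
  set L : Submodule ℤ ((Fin n → ℝ) × (Fin m → ℝ)) := AddSubgroup.toIntSubmodule D' with hL
  have hdiscL : DiscreteTopology L := hdisc
  have hfin : Module.Finite ℤ L := inferInstance
  have hfree : Module.Free ℤ L := inferInstance
  have hrank : finrank ℤ L ≤ n + m := by
    refine le_trans (finrank_le_of_discrete L) ?_
    simp [Module.finrank_prod, Module.finrank_pi]
  -- choose a basis
  haveI : Fintype (Module.Free.ChooseBasisIndex ℤ L) := Module.Free.ChooseBasisIndex.fintype ℤ L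
  let b := Module.Free.chooseBasis ℤ L
  have hcard : Fintype.card (Module.Free.ChooseBasisIndex ℤ L) = finrank ℤ L :=
    (@Fintype.card_congr _ _ _ (Module.Free.ChooseBasisIndex.fintype ℤ L) (Equiv.refl _)).trans (finrank_eq_card_chooseBasisIndex ℤ L).symm
  -- the generating finset upstairs
  let T : Finset ((Fin n → ℝ) × (Fin m → ℝ)) :=
    Finset.univ.image fun i => ((b i : L) : _)
  have hT : AddSubgroup.closure (↑T : Set ((Fin n → ℝ) × (Fin m → ℝ))) = D' := by
    have hTs : (↑T : Set ((Fin n → ℝ) × (Fin m → ℝ))) =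
        Subtype.val '' Set.range b := by
      simp only [T, Finset.coe_image, Finset.coe_univ, Set.image_univ]
      exact Set.range_comp Subtype.val ⇑b
    rw [hTs, ← Submodule.span_int_eq_addSubgroupClosure]
    have : Submodule.span ℤ (Subtype.val '' Set.range b) = Submodule.map L.subtype ⊤ := by
      rw [← b.span_eq, Submodule.map_span]
      rfl
    rw [this, Submodule.map_top, Submodule.range_subtype]
    rfl
  refine ⟨T.image (phi n m), ?_, ?_, ?_⟩
  · intro x hx
    simp only [Finset.coe_image, Set.mem_image] at hx
    obtain ⟨v, hv, rfl⟩ := hx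
    have hvD' : v ∈ D' := by
      rw [← hT]
      exact AddSubgroup.subset_closure hv
    exact hvD'
  · rw [Finset.coe_image, ← AddMonoidHom.map_closure, hT]
    exact AddSubgroup.map_comap_eq_self_of_surjective (phi_surj n m) D
  · exact le_trans (Finset.card_image_le) <| le_trans (Finset.card_image_le.trans (by simp [hcard])) hrank
end

section
/- Let H and H′ be subgroups of a group G and suppose H is contained in the union of n right cosets of H′. Then H ∩ H′ has index at most n in H. -/
/-- If a subgroup `H` is contained in the union of `n` right cosets of `H'`, then
`H ∩ H'` has (finite) index at most `n` in `H`. -/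
theorem relindex_le_of_cover_by_cosets {G : Type*} [Group G] (H H' : Subgroup G)
    (n : ℕ) (g : Fin n → G)
    (hcov : (H : Set G) ⊆ ⋃ i, (fun h => h * g i) '' (H' : Set G)) :
    0 < H'.relIndex H ∧ H'.relIndex H ≤ n := by
  classical
  set K := H'.subgroupOf H with hK
  have hex : ∀ h : H, ∃ i : Fin n, ∃ x ∈ H', x * g i = (h : G)⁻¹ := by
    intro h
    have hm : ((h : G))⁻¹ ∈ (H : Set G) := H.inv_mem h.2
    have hu := hcov hm
    rw [Set.mem_iUnion] at hu
    obtain ⟨i, x, hx, hxe⟩ := hu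
    exact ⟨i, x, hx, hxe⟩
  let f : (H ⧸ K) → Fin n := fun q => (hex q.out).choose
  have hf : Function.Injective f := by
    intro q1 q2 hq
    simp only [f] at hq
    obtain ⟨x, hx, hx2⟩ := (hex q1.out).choose_spec
    obtain ⟨y, hy, hy2⟩ := (hex q2.out).choose_spec
    rw [hq] at hx2
    generalize g ((hex q2.out).choose) = w at hx2 hy2
    have hmem : ((q1.out : G))⁻¹ * (q2.out : G) ∈ H' := by
      have h2 : ((q2.out : G)) = (y * w)⁻¹ := by rw [hy2]; simp
      have h1 : ((q1.out : G))⁻¹ = x * w := hx2.symm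
      have : ((q1.out : G))⁻¹ * (q2.out : G) = x * y⁻¹ := by
        rw [h1, h2]; group
      rw [this]; exact H'.mul_mem hx (H'.inv_mem hy)
    have hKmem : q1.out⁻¹ * q2.out ∈ K :=
      Subgroup.mem_subgroupOf.mpr (by simpa using hmem)
    have hrel : (⟦q1.out⟧ : H ⧸ K) = ⟦q2.out⟧ :=
      Quotient.sound (QuotientGroup.leftRel_apply.mpr hKmem)
    rwa [Quotient.out_eq, Quotient.out_eq] at hrel
  have hfin : Finite (H ⧸ K) := Finite.of_injective f hf
  have hcard : Nat.card (H ⧸ K) ≤ n := by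
    have := Nat.card_le_card_of_injective f hf
    simpa using this
  have hrel : H'.relIndex H = Nat.card (H ⧸ K) := rfl
  refine ⟨?_, by rw [hrel]; exact hcard⟩
  rw [hrel]
  exact Nat.card_pos
end
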